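/- arXiv:0905.4679 — 5 statements merged into one kernel-verified Lean document; each statement's English description precedes it below -/
import Mathlib

section
/- Every single-valued weakly continuous function is continuous: let D ⊆ ℕ^ℕ and φ : ℕ^ℕ → ℕ^ℕ, and let f be the multi-valued function with f(p) = {φ(p)} for p ∈ D and f(p) = ∅ otherwise. If f ≤_W \widehat{LLPO}, then the restriction of φ to D is continuous (φ is continuous on D with respect to the subspace topology of ℕ^ℕ). -/
/-- Baire space `ℕ^ℕ` with the product topology (`ℕ` discrete). -/
abbrev Baire : Type := ℕ → ℕ

/-- The pairing `⟨p,q⟩` on Baire space: `⟨p,q⟩(2n) = p(n)`, `⟨p,q⟩(2n+1) = q(n)`. -/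
def bpair (p q : Baire) : Baire := fun n => if n % 2 = 0 then p (n / 2) else q (n / 2)

/-- First projection `π₁`. -/
def proj1 (r : Baire) : Baire := fun n => r (2 * n)

/-- Second projection `π₂`. -/
def proj2 (r : Baire) : Baire := fun n => r (2 * n + 1)

/-- Multi-valued functions on Baire space. -/
abbrev MV : Type := Baire → Set Baire

/-- The domain of a multi-valued function. -/
def dom (f : MV) : Set Baire := {p | (f p).Nonempty}

/-- `F` is a realizer of `f`: `F p ∈ f p` for all `p` in the domain of `f`. -/
def Realizes (F : Baire → Baire) (f : MV) : Prop := ∀ p, (f p).Nonempty → F p ∈ f p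

/-- Continuous Weihrauch reducibility `f ≤_W g`. -/
def WRed (f g : MV) : Prop :=
  ∃ H K : Baire → Baire, Continuous H ∧ Continuous K ∧
    ∀ G : Baire → Baire, Realizes G g → Realizes (fun p => H (bpair p (G (K p)))) f

/-- Strong continuous Weihrauch reducibility `f ≤_sW g`. -/
def SWRed (f g : MV) : Prop :=
  ∃ H K : Baire → Baire, Continuous H ∧ Continuous K ∧
    ∀ G : Baire → Baire, Realizes G g → Realizes (fun p => H (G (K p))) f

/-- Continuous Weihrauch equivalence. -/
def WEquiv (f g : MV) : Prop := WRed f g ∧ WRed g f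

/-- Strong continuous Weihrauch equivalence. -/
def SWEquiv (f g : MV) : Prop := SWRed f g ∧ SWRed g f

/-- The parallelized lesser limited principle of omniscience. -/
def parLLPO : MV := fun p =>
  {q | ∀ k, (q k = 0 ∧ ∀ n, p (Nat.pair k (2 * n)) = 0) ∨
            (q k = 1 ∧ ∀ n, p (Nat.pair k (2 * n + 1)) = 0)}

/-- Every single-valued weakly continuous function is continuous: if `f` is the
multi-valued function with `f(p) = {φ(p)}` on `D` and `∅` elsewhere, and
`f ≤_W \widehat{LLPO}`, then `φ` is continuous on `D`. -/
theorem singleValued_weaklyContinuous_continuous (D : Set Baire) (φ : Baire → Baire)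
    (f : MV) (hfD : ∀ p ∈ D, f p = {φ p}) (hfD' : ∀ p ∉ D, f p = (∅ : Set Baire))
    (h : WRed f parLLPO) : ContinuousOn φ D := by
  classical
  obtain ⟨H, K, hH, hK, hHK⟩ := h
  -- Key lemma: for p ∈ D, H(bpair p q) = φ p for any admissible answer q.
  have key : ∀ p ∈ D, ∀ q : Baire, ((parLLPO (K p)).Nonempty → q ∈ parLLPO (K p)) →
      H (bpair p q) = φ p := by
    intro p hp q hq
    set G : Baire → Baire := fun x =>
      if h : (parLLPO x).Nonempty ∧ q ∉ parLLPO x then h.1.some else q with hGdef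
    have hG : Realizes G parLLPO := by
      intro x hx
      by_cases hc : (parLLPO x).Nonempty ∧ q ∉ parLLPO x
      · simp only [hGdef, dif_pos hc]; exact hc.1.some_mem
      · simp only [hGdef, dif_neg hc]
        push_neg at hc
        exact hc hx
    have hmem := hHK G hG p (by rw [hfD p hp]; exact ⟨φ p, rfl⟩)
    rw [hfD p hp] at hmem
    have hGK : G (K p) = q := by
      simp only [hGdef]
      rw [dif_neg]
      rintro ⟨h1, h2⟩
      exact h2 (hq h1)
    have hmem' : H (bpair p (G (K p))) = φ p := hmem
    rw [hGK] at hmem'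
    exact hmem'
  have hbp : Continuous fun z : Baire × Baire => bpair z.1 z.2 := by
    apply continuous_pi
    intro i
    by_cases hi : i % 2 = 0
    · have hc : Continuous fun z : Baire × Baire => z.1 (i / 2) :=
        (continuous_apply (i / 2)).comp continuous_fst
      simpa [bpair, hi] using hc
    · have hc : Continuous fun z : Baire × Baire => z.2 (i / 2) :=
        (continuous_apply (i / 2)).comp continuous_snd
      simpa [bpair, hi] using hc
  intro p₀ hp₀
  show Filter.Tendsto φ (nhdsWithin p₀ D) (nhds (φ p₀))
  rw [tendsto_nhds]
  intro W hWopen hW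
  rw [mem_nhdsWithin]
  by_cases hne : (parLLPO (K p₀)).Nonempty
  · -- nonempty case: compactness / tube lemma argument
    set C : Set Baire := {q | ∀ k, q k ≤ 1} with hCdef
    have hCcomp : IsCompact C := by
      have hCeq : C = Set.pi Set.univ (fun _ : ℕ => Set.Iic 1) := by
        ext q
        simp only [hCdef, Set.mem_setOf_eq, Set.mem_univ_pi, Set.mem_Iic]
      rw [hCeq]
      exact isCompact_univ_pi fun _ => (Set.finite_Iic 1).isCompact
    have hsubC : ∀ x, parLLPO x ⊆ C := by
      intro x q hq k
      rcases hq k with ⟨h0, _⟩ | ⟨h1, _⟩ <;> omega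
    have hT : IsClosed {z : Baire × Baire | z.2 ∈ parLLPO (K z.1)} := by
      have heq : {z : Baire × Baire | z.2 ∈ parLLPO (K z.1)} =
          ⋂ k, (({z : Baire × Baire | z.2 k = 0} ∩
                  ⋂ n, {z : Baire × Baire | K z.1 (Nat.pair k (2 * n)) = 0}) ∪
                ({z : Baire × Baire | z.2 k = 1} ∩
                  ⋂ n, {z : Baire × Baire | K z.1 (Nat.pair k (2 * n + 1)) = 0})) := by
        ext z
        simp [parLLPO, Set.mem_iInter]
      rw [heq]
      refine isClosed_iInter fun k => IsClosed.union
        (IsClosed.inter ?_ (isClosed_iInter fun n => ?_))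
        (IsClosed.inter ?_ (isClosed_iInter fun n => ?_))
      · exact isClosed_eq ((continuous_apply k).comp continuous_snd) continuous_const
      · exact isClosed_eq ((continuous_apply _).comp (hK.comp continuous_fst)) continuous_const
      · exact isClosed_eq ((continuous_apply k).comp continuous_snd) continuous_const
      · exact isClosed_eq ((continuous_apply _).comp (hK.comp continuous_fst)) continuous_const
    have hC₀closed : IsClosed (parLLPO (K p₀)) := by
      have hpre : parLLPO (K p₀) =
          (fun q : Baire => ((p₀ : Baire), q)) ⁻¹' {z : Baire × Baire | z.2 ∈ parLLPO (K z.1)} :=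
        rfl
      rw [hpre]
      exact hT.preimage (continuous_const.prodMk continuous_id)
    have hC₀ : IsCompact (parLLPO (K p₀)) :=
      IsCompact.of_isClosed_subset hCcomp hC₀closed (hsubC _)
    have hh : Continuous fun z : Baire × Baire => H (bpair z.1 z.2) := hH.comp hbp
    have hsub1 : {p₀} ×ˢ parLLPO (K p₀) ⊆
        (fun z : Baire × Baire => H (bpair z.1 z.2)) ⁻¹' W := by
      rintro ⟨p, q⟩ ⟨hp, hq⟩
      rcases hp with rfl
      have heq := key p hp₀ q (fun _ => hq)
      show H (bpair p q) ∈ W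
      rw [heq]
      exact hW
    obtain ⟨u, v, hu, hv, hp₀u, hCv, huv⟩ :=
      generalized_tube_lemma isCompact_singleton hC₀ (hWopen.preimage hh) hsub1
    have hM : IsCompact (C \ v) := hCcomp.diff hv
    have hsub2 : {p₀} ×ˢ (C \ v) ⊆ {z : Baire × Baire | z.2 ∈ parLLPO (K z.1)}ᶜ := by
      rintro ⟨p, q⟩ ⟨hp, hq⟩ hmem
      rcases hp with rfl
      exact hq.2 (hCv hmem)
    obtain ⟨u', v', hu', hv', hp₀u', hMv', hu'v'⟩ :=
      generalized_tube_lemma isCompact_singleton hM hT.isOpen_compl hsub2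
    refine ⟨u ∩ u', hu.inter hu', ⟨hp₀u rfl, hp₀u' rfl⟩, ?_⟩
    rintro p ⟨⟨hpu, hpu'⟩, hpD⟩
    have hclaim : ∀ q ∈ parLLPO (K p), q ∈ v := by
      intro q hq
      by_contra hqv
      have hqM : q ∈ C \ v := ⟨hsubC _ hq, hqv⟩
      exact hu'v' (Set.mk_mem_prod hpu' (hMv' hqM)) hq
    by_cases hpne : (parLLPO (K p)).Nonempty
    · obtain ⟨q, hq⟩ := hpne
      have heq := key p hpD q (fun _ => hq)
      have hin : (p, q) ∈ u ×ˢ v := ⟨hpu, hclaim q hq⟩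
      have := huv hin
      simpa [heq] using this
    · obtain ⟨q₀, hq₀⟩ := hne
      have heq := key p hpD q₀ (fun hn => absurd hn hpne)
      have hin : (p, q₀) ∈ u ×ˢ v := ⟨hpu, hCv hq₀⟩
      have := huv hin
      simpa [heq] using this
  · -- empty case
    have hwit : ∃ k, (∃ n, K p₀ (Nat.pair k (2 * n)) ≠ 0) ∧
        ∃ m, K p₀ (Nat.pair k (2 * m + 1)) ≠ 0 := by
      by_contra hcon
      push_neg at hcon
      apply hne
      refine ⟨fun k => if ∀ n, K p₀ (Nat.pair k (2 * n)) = 0 then 0 else 1, fun k => ?_⟩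
      by_cases he : ∀ n, K p₀ (Nat.pair k (2 * n)) = 0
      · exact Or.inl ⟨if_pos he, he⟩
      · refine Or.inr ⟨if_neg he, ?_⟩
        push_neg at he
        obtain ⟨n, hn⟩ := he
        exact hcon k ⟨n, hn⟩
    obtain ⟨k, ⟨n, hn⟩, ⟨m, hm⟩⟩ := hwit
    set c : Baire := fun _ => 0 with hcdef
    have hg : Continuous fun p : Baire => H (bpair p c) := by
      have h1 : Continuous fun p : Baire => ((p, c) : Baire × Baire) :=
        continuous_id.prodMk (continuous_const : Continuous fun _ : Baire => c)
      exact hH.comp (hbp.comp h1)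
    have hempty : ∀ p : Baire, K p (Nat.pair k (2 * n)) ≠ 0 →
        K p (Nat.pair k (2 * m + 1)) ≠ 0 → ¬(parLLPO (K p)).Nonempty := by
      rintro p h1 h2 ⟨q, hq⟩
      rcases hq k with ⟨_, h0⟩ | ⟨_, h0⟩
      · exact h1 (h0 n)
      · exact h2 (h0 m)
    have hop1 : IsOpen {p : Baire | K p (Nat.pair k (2 * n)) ≠ 0} := by
      have : {p : Baire | K p (Nat.pair k (2 * n)) ≠ 0} =
          (fun p : Baire => K p (Nat.pair k (2 * n))) ⁻¹' ({0}ᶜ) := rfl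
      rw [this]
      exact isOpen_compl_singleton.preimage ((continuous_apply _).comp hK)
    have hop2 : IsOpen {p : Baire | K p (Nat.pair k (2 * m + 1)) ≠ 0} := by
      have : {p : Baire | K p (Nat.pair k (2 * m + 1)) ≠ 0} =
          (fun p : Baire => K p (Nat.pair k (2 * m + 1))) ⁻¹' ({0}ᶜ) := rfl
      rw [this]
      exact isOpen_compl_singleton.preimage ((continuous_apply _).comp hK)
    refine ⟨{p : Baire | K p (Nat.pair k (2 * n)) ≠ 0} ∩
        {p : Baire | K p (Nat.pair k (2 * m + 1)) ≠ 0} ∩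
        (fun p : Baire => H (bpair p c)) ⁻¹' W,
      (hop1.inter hop2).inter (hWopen.preimage hg), ?_, ?_⟩
    · refine ⟨⟨hn, hm⟩, ?_⟩
      have heq := key p₀ hp₀ c (fun hx => absurd hx hne)
      simpa [heq] using hW
    · rintro p ⟨⟨⟨h1, h2⟩, h3⟩, hpD⟩
      have heq := key p hpD c (fun hx => absurd hx (hempty p h1 h2))
      simpa [heq] using h3
end

section
/- Parallelization commutes with products up to strong equivalence: for all multi-valued functions f, g on Baire space, (f × g)^∧ ≡_sW f̂ × ĝ. -/
/-- The product `f × g` of multi-valued functions. -/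
def mprod (f g : MV) : MV := fun r =>
  {s | ∃ y ∈ f (proj1 r), ∃ v ∈ g (proj2 r), s = bpair y v}

/-- The `i`-th component `(p)ᵢ` of `p`, `(p)ᵢ(j) = p⟨i,j⟩`. -/
def comp (p : Baire) (i : ℕ) : Baire := fun j => p (Nat.pair i j)

/-- The parallelization `f̂` of a multi-valued function `f`. -/
def par (f : MV) : MV := fun p => {q | ∀ i, comp q i ∈ f (comp p i)}

/-- "split even": `s1 r` interleave-selects even positions componentwise. -/
def s1 (r : Baire) : Baire := fun n => r (Nat.pair n.unpair.1 (2 * n.unpair.2))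

def s2 (r : Baire) : Baire := fun n => r (Nat.pair n.unpair.1 (2 * n.unpair.2 + 1))

/-- Rearranging map `A`. -/
def A (r : Baire) : Baire := bpair (s1 r) (s2 r)

/-- Rearranging map `B`. -/
def B (r : Baire) : Baire := fun n =>
  if n.unpair.2 % 2 = 0 then r (2 * Nat.pair n.unpair.1 (n.unpair.2 / 2))
  else r (2 * Nat.pair n.unpair.1 (n.unpair.2 / 2) + 1)

lemma proj1_bpair (p q : Baire) : proj1 (bpair p q) = p := by
  funext n
  simp [proj1, bpair, Nat.mul_mod_right, Nat.mul_div_cancel_left]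

lemma proj2_bpair (p q : Baire) : proj2 (bpair p q) = q := by
  funext n
  have h1 : (2 * n + 1) % 2 = 1 := by omega
  have h2 : (2 * n + 1) / 2 = n := by omega
  simp [proj2, bpair, h1, h2]

lemma comp_s1 (r : Baire) (i : ℕ) : comp (s1 r) i = proj1 (comp r i) := by
  funext j; simp [comp, s1, proj1, Nat.unpair_pair]

lemma comp_s2 (r : Baire) (i : ℕ) : comp (s2 r) i = proj2 (comp r i) := by
  funext j; simp [comp, s2, proj2, Nat.unpair_pair]

lemma comp_B (r : Baire) (i : ℕ) :
    comp (B r) i = bpair (comp (proj1 r) i) (comp (proj2 r) i) := by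
  funext j
  simp only [comp, B, bpair, proj1, proj2, Nat.unpair_pair]

lemma continuous_A : Continuous A := by
  apply continuous_pi
  intro n
  unfold A bpair s1 s2
  split <;> exact continuous_apply _

lemma continuous_B : Continuous B := by
  apply continuous_pi
  intro n
  unfold B
  split <;> exact continuous_apply _

/-- If every component set is nonempty, the parallelization value is nonempty. -/
lemma par_nonempty (f : MV) (p : Baire) (h : ∀ i, (f (comp p i)).Nonempty) :
    (par f p).Nonempty := by
  choose c hc using h
  refine ⟨fun n => c n.unpair.1 n.unpair.2, fun i => ?_⟩
  have : comp (fun n => c n.unpair.1 n.unpair.2) i = c i := by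
    funext j; simp [comp, Nat.unpair_pair]
  rw [this]
  exact hc i

/-- Parallelization commutes with products: `(f × g)^∧ ≡_sW f̂ × ĝ`. -/
theorem par_prod (f g : MV) : SWEquiv (par (mprod f g)) (mprod (par f) (par g)) := by
  constructor
  · -- par (f × g) ≤ par f × par g  with H = B, K = A
    refine ⟨B, A, continuous_B, continuous_A, ?_⟩
    intro G hG p hne
    obtain ⟨q0, hq0⟩ := hne
    have hfne : ∀ i, (f (proj1 (comp p i))).Nonempty := fun i =>
      let ⟨y, hy, _, _, _⟩ := hq0 i; ⟨y, hy⟩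
    have hgne : ∀ i, (g (proj2 (comp p i))).Nonempty := fun i =>
      let ⟨_, _, v, hv, _⟩ := hq0 i; ⟨v, hv⟩
    -- the target instance is nonempty
    have hpf : (par f (s1 p)).Nonempty := by
      apply par_nonempty; intro i; rw [comp_s1]; exact hfne i
    have hpg : (par g (s2 p)).Nonempty := by
      apply par_nonempty; intro i; rw [comp_s2]; exact hgne i
    obtain ⟨Y0, hY0⟩ := hpf
    obtain ⟨V0, hV0⟩ := hpg
    have hneA : (mprod (par f) (par g) (A p)).Nonempty := by
      refine ⟨bpair Y0 V0, Y0, ?_, V0, ?_, rfl⟩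
      · rw [A, proj1_bpair]; exact hY0
      · rw [A, proj2_bpair]; exact hV0
    obtain ⟨Y, hY, V, hV, hEq⟩ := hG (A p) hneA
    rw [A, proj1_bpair] at hY
    rw [A, proj2_bpair] at hV
    intro i
    show comp (B (G (A p))) i ∈ mprod f g (comp p i)
    rw [hEq, comp_B, proj1_bpair, proj2_bpair]
    refine ⟨comp Y i, ?_, comp V i, ?_, rfl⟩
    · have := hY i; rwa [comp_s1] at this
    · have := hV i; rwa [comp_s2] at this
  · -- par f × par g ≤ par (f × g)  with H = A, K = B
    refine ⟨A, B, continuous_A, continuous_B, ?_⟩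
    intro G hG r hne
    obtain ⟨-, Y, hY, V, hV, -⟩ := hne
    have hneB : (par (mprod f g) (B r)).Nonempty := by
      apply par_nonempty
      intro i
      rw [comp_B]
      exact ⟨bpair (comp Y i) (comp V i), comp Y i,
        by rw [proj1_bpair]; exact hY i, comp V i,
        by rw [proj2_bpair]; exact hV i, rfl⟩
    have hGm := hG (B r) hneB
    show A (G (B r)) ∈ mprod (par f) (par g) r
    refine ⟨s1 (G (B r)), ?_, s2 (G (B r)), ?_, rfl⟩
    · intro i
      obtain ⟨y, hy, v, hv, hq⟩ := hGm i
      rw [comp_B, proj1_bpair] at hy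
      rw [comp_s1, hq, proj1_bpair]
      exact hy
    · intro i
      obtain ⟨y, hy, v, hv, hq⟩ := hGm i
      rw [comp_B, proj2_bpair] at hv
      rw [comp_s2, hq, proj2_bpair]
      exact hv
end

section
/- LPO is reducible to every discontinuous function: let D ⊆ ℕ^ℕ and F : ℕ^ℕ → ℕ^ℕ be such that the restriction of F to D is not continuous (as a map from the subspace D to ℕ^ℕ). Then there exist continuous total K, H : ℕ^ℕ → ℕ^ℕ with K(ℕ^ℕ) ⊆ D such that H ∘ F ∘ K is a realizer of LPO (i.e. for all p ∈ ℕ^ℕ, H(F(K(p)))(0) = 0 if ∃ n, p(n) = 0, and H(F(K(p)))(0) = 1 otherwise). -/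
/-- The limited principle of omniscience `LPO`. -/
def LPO : MV := fun p =>
  {q | ((∃ n, p n = 0) ∧ q 0 = 0) ∨ ((¬ ∃ n, p n = 0) ∧ q 0 = 1)}

/-- `LPO` is reducible to every discontinuous function. -/
theorem lpo_le_discontinuous (D : Set Baire) (F : Baire → Baire)
    (hF : ¬ ContinuousOn F D) :
    ∃ K H : Baire → Baire, Continuous K ∧ Continuous H ∧ Set.range K ⊆ D ∧
      ∀ p : Baire, ((∃ n, p n = 0) → H (F (K p)) 0 = 0) ∧
        ((¬ ∃ n, p n = 0) → H (F (K p)) 0 = 1) := by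
  classical
  have hopen : ∀ (n : ℕ) (x : Baire), IsOpen {y : Baire | ∀ j < n, y j = x j} := by
    intro n x
    have he : {y : Baire | ∀ j < n, y j = x j}
        = ⋂ j ∈ Finset.range n, (fun y : Baire => y j) ⁻¹' {x j} := by
      ext y; simp
    rw [he]
    exact isOpen_biInter_finset fun j _ =>
      (continuous_apply j).isOpen_preimage _ (isOpen_discrete _)
  rw [ContinuousOn] at hF
  push_neg at hF
  obtain ⟨x, hxD, hx⟩ := hF
  rw [ContinuousWithinAt, tendsto_pi_nhds] at hx
  push_neg at hx
  obtain ⟨i, hi⟩ := hx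
  have hni : {y : Baire | F y i = F x i} ∉ nhdsWithin x D := by
    intro hmem
    exact hi ((Filter.tendsto_pure.2 hmem).mono_right (pure_le_nhds _))
  have key : ∀ n, ∃ y, y ∈ D ∧ (∀ j < n, y j = x j) ∧ F y i ≠ F x i := by
    intro n
    by_contra hcon
    push_neg at hcon
    apply hni
    rw [mem_nhdsWithin]
    exact ⟨_, hopen n x, fun j _ => rfl, fun z hz => hcon z hz.2 hz.1⟩
  choose y hyD hyA hyNe using key
  refine ⟨fun p => if h : ∃ n, p n = 0 then y (Nat.find h + 1) else x,
    fun q _ => if q i = F x i then 1 else 0, ?_, ?_, ?_, ?_⟩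
  · apply continuous_pi
    intro k
    apply IsLocallyConstant.continuous
    rw [IsLocallyConstant.iff_exists_open]
    intro p
    by_cases h : ∃ n, p n = 0
    · refine ⟨{p' | ∀ j < Nat.find h + 1, p' j = p j}, hopen _ p, fun j _ => rfl, ?_⟩
      intro p' hp'
      have h' : ∃ n, p' n = 0 :=
        ⟨Nat.find h, by rw [hp' _ (Nat.lt_succ_self _)]; exact Nat.find_spec h⟩
      have hfind : Nat.find h' = Nat.find h := by
        apply le_antisymm
        · exact Nat.find_le (by rw [hp' _ (Nat.lt_succ_self _)]; exact Nat.find_spec h)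
        · rw [Nat.le_find_iff]
          intro j hj
          rw [hp' j (hj.trans (Nat.lt_succ_self _))]
          exact Nat.find_min h hj
      simp only [dif_pos h', dif_pos h, hfind]
    · refine ⟨{p' | ∀ j < k + 1, p' j = p j}, hopen _ p, fun j _ => rfl, ?_⟩
      intro p' hp'
      simp only [dif_neg h]
      by_cases h' : ∃ n, p' n = 0
      · simp only [dif_pos h']
        have hk : k < Nat.find h' := by
          by_contra hle
          push_neg at hle
          exact h ⟨Nat.find h',
            (hp' _ (Nat.lt_succ_of_le hle)).symm.trans (Nat.find_spec h')⟩
        exact hyA (Nat.find h' + 1) k (Nat.lt_succ_of_lt hk)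
      · simp only [dif_neg h']
  · apply continuous_pi
    intro k
    exact (continuous_of_discreteTopology
      (f := fun t : ℕ => if t = F x i then 1 else 0)).comp (continuous_apply i)
  · rintro _ ⟨p, rfl⟩
    by_cases h : ∃ n, p n = 0
    · simp only [dif_pos h]; exact hyD _
    · simp only [dif_neg h]; exact hxD
  · intro p
    constructor
    · intro h
      simp only [dif_pos h, if_neg (hyNe _)]
    · intro h
      simp [dif_neg h]
end

section
/- The parallelized LLPO absorbs its own composition: (\widehat{LLPO} ∘ \widehat{LLPO}) ≤_sW \widehat{LLPO}, where ∘ denotes composition of multi-valued functions. -/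
/-- Composition of multi-valued functions: `(g ∘ f)(x) = {z | ∃ y ∈ f(x), z ∈ g(y)}`
if `x ∈ dom(f)` and `f(x) ⊆ dom(g)`, and `∅` otherwise. -/
def mComp (g f : MV) : MV := fun x =>
  {z | (f x).Nonempty ∧ (∀ y ∈ f x, (g y).Nonempty) ∧ ∃ y ∈ f x, z ∈ g y}

/-- The reduction's inner map `K`. -/
def Kfun (p : Baire) : Baire := fun j =>
  if (j.unpair.2) % 2 = 0
  then p (Nat.pair (Nat.pair j.unpair.1 (2 * (j.unpair.2 / 2).unpair.1))
            (2 * (j.unpair.2 / 2).unpair.2))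
  else p (Nat.pair (Nat.pair j.unpair.1 (2 * (j.unpair.2 / 2).unpair.1 + 1))
            (2 * (j.unpair.2 / 2).unpair.2))

lemma Kfun_even (p : Baire) (k t : ℕ) :
    Kfun p (Nat.pair k (2 * t)) =
      p (Nat.pair (Nat.pair k (2 * t.unpair.1)) (2 * t.unpair.2)) := by
  have h1 : (2 * t) % 2 = 0 := by omega
  have h2 : (2 * t) / 2 = t := by omega
  simp [Kfun, Nat.unpair_pair, h1, h2]

lemma Kfun_odd (p : Baire) (k t : ℕ) :
    Kfun p (Nat.pair k (2 * t + 1)) =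
      p (Nat.pair (Nat.pair k (2 * t.unpair.1 + 1)) (2 * t.unpair.2)) := by
  have h1 : ¬ ((2 * t + 1) % 2 = 0) := by omega
  have h2 : (2 * t + 1) / 2 = t := by omega
  simp [Kfun, Nat.unpair_pair, h1, h2]

/-- The parallelized `LLPO` absorbs its own composition:
`\widehat{LLPO} ∘ \widehat{LLPO} ≤_sW \widehat{LLPO}`. -/
theorem parLLPO_comp_self : SWRed (mComp parLLPO parLLPO) parLLPO := by
  classical
  refine ⟨id, Kfun, continuous_id, ?_, ?_⟩
  · refine continuous_pi fun j => ?_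
    unfold Kfun
    split_ifs <;> exact continuous_apply _
  intro G hG p hp
  obtain ⟨z, hz1, hz2, y0, hy0, hz3⟩ := hp
  obtain ⟨w, hw⟩ := hz1
  -- If the even column of row j of p is not all zero, the odd column is.
  have hAB : ∀ j, ¬ (∀ n, p (Nat.pair j (2 * n)) = 0) →
      (∀ n, p (Nat.pair j (2 * n + 1)) = 0) := by
    intro j hj
    rcases hw j with ⟨_, h⟩ | ⟨_, h⟩
    · exact absurd h hj
    · exact h
  -- membership in parLLPO p forces the even column (resp. odd) to vanish
  have hforce0 : ∀ (y : Baire), y ∈ parLLPO p → ∀ j, y j = 0 →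
      ∀ m, p (Nat.pair j (2 * m)) = 0 := by
    intro y hy j hj m
    rcases hy j with ⟨_, h⟩ | ⟨h1, _⟩
    · exact h m
    · omega
  -- key dichotomy for each k
  have key : ∀ k, (∀ n m, p (Nat.pair (Nat.pair k (2 * n)) (2 * m)) = 0) ∨
      (∀ n m, p (Nat.pair (Nat.pair k (2 * n + 1)) (2 * m)) = 0) := by
    intro k
    rcases hz3 k with ⟨_, h⟩ | ⟨_, h⟩
    · exact Or.inl fun n m => hforce0 y0 hy0 _ (h n) m
    · exact Or.inr fun n m => hforce0 y0 hy0 _ (h n) m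
  -- (parLLPO (Kfun p)) is nonempty
  have hKne : (parLLPO (Kfun p)).Nonempty := by
    refine ⟨fun k => if (∀ n m, p (Nat.pair (Nat.pair k (2 * n)) (2 * m)) = 0)
      then 0 else 1, fun k => ?_⟩
    by_cases hc : ∀ n m, p (Nat.pair (Nat.pair k (2 * n)) (2 * m)) = 0
    · refine Or.inl ⟨by simp [hc], fun t => ?_⟩
      rw [Kfun_even]; exact hc _ _
    · refine Or.inr ⟨by simp [hc], fun t => ?_⟩
      rw [Kfun_odd]
      rcases key k with h | h
      · exact absurd h hc
      · exact h _ _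
  have hq := hG (Kfun p) hKne
  -- the intermediate witness y
  set y : Baire := fun j => if (∀ n, p (Nat.pair j (2 * n)) = 0) then 0 else 1 with hy_def
  have hy : y ∈ parLLPO p := by
    intro j
    by_cases hc : ∀ n, p (Nat.pair j (2 * n)) = 0
    · exact Or.inl ⟨by simp [hy_def, hc], hc⟩
    · exact Or.inr ⟨by simp [hy_def, hc], hAB j hc⟩
  refine ⟨⟨w, hw⟩, hz2, y, hy, fun k => ?_⟩
  rcases hq k with ⟨h0, h⟩ | ⟨h1, h⟩
  · refine Or.inl ⟨h0, fun n => ?_⟩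
    have hA : ∀ m, p (Nat.pair (Nat.pair k (2 * n)) (2 * m)) = 0 := by
      intro m
      have := h (Nat.pair n m)
      rwa [Kfun_even, Nat.unpair_pair] at this
    simp [hy_def, hA]
  · refine Or.inr ⟨h1, fun n => ?_⟩
    have hA : ∀ m, p (Nat.pair (Nat.pair k (2 * n + 1)) (2 * m)) = 0 := by
      intro m
      have := h (Nat.pair n m)
      rwa [Kfun_odd, Nat.unpair_pair] at this
    simp [hy_def, hA]
end

section
/- Classification of the omniscience principles under continuous Weihrauch reducibility: (1) LLPO ≤_W LPO; (2) \widehat{LLPO} ≤_W C; (3) LPO is not reducible to \widehat{LLPO} (in particular LPO is not reducible to LLPO); (4) \widehat{LLPO} is not reducible to LPO; (5) C is not reducible to \widehat{LLPO}. Hence LLPO <_W LPO, LPO and \widehat{LLPO} are incomparable, and \widehat{LLPO} <_W C. -/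
/-- The parallelization of `LPO` as a single-valued function:
`C(p)(n) = 0` if `∃ k, p⟨n,k⟩ = 0` and `1` otherwise. -/
noncomputable def C : Baire → Baire := fun p n =>
  letI := Classical.propDecidable
  if ∃ k, p (Nat.pair n k) = 0 then 0 else 1

/-- The lesser limited principle of omniscience `LLPO`. -/
def LLPO : MV := fun p =>
  {q | (q 0 = 0 ∧ ∀ n, p (2 * n) = 0) ∨ (q 0 = 1 ∧ ∀ n, p (2 * n + 1) = 0)}

/-- `C` as a multi-valued function. -/
noncomputable def Cmv : MV := fun p => {C p}

-- continuity helpers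
lemma cont_coord (F : Baire → Baire) (h : ∀ n, ∃ g : ℕ → ℕ, ∃ m, ∀ p, F p n = g (p m)) :
    Continuous F := by
  apply continuous_pi
  intro n
  obtain ⟨g, m, hg⟩ := h n
  have : (fun p : Baire => F p n) = g ∘ (fun p : Baire => p m) := funext fun p => hg p
  rw [this]
  exact (continuous_of_discreteTopology).comp (continuous_apply m)

lemma cont_bpair {f g : Baire → Baire} (hf : Continuous f) (hg : Continuous g) :
    Continuous fun p => bpair (f p) (g p) := by
  apply continuous_pi
  intro n
  unfold bpair
  by_cases h : n % 2 = 0 <;> simp only [h, if_true, if_false, if_pos, if_neg, reduceIte]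
  · exact (continuous_apply (n/2)).comp hf
  · exact (continuous_apply (n/2)).comp hg

lemma cont_proj1 : Continuous proj1 := continuous_pi fun n => continuous_apply (2*n)
lemma cont_proj2 : Continuous proj2 := continuous_pi fun n => continuous_apply (2*n+1)

lemma loc_const (H : Baire → Baire) (hH : Continuous H) (x : Baire) (i : ℕ) :
    ∃ s : Finset ℕ, ∀ y : Baire, (∀ j ∈ s, y j = x j) → H y i = H x i := by
  have hc : Continuous fun y : Baire => H y i := (continuous_apply i).comp hH
  have hU : (fun y : Baire => H y i) ⁻¹' {H x i} ∈ nhds x :=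
    (hc.isOpen_preimage _ (isOpen_discrete _)).mem_nhds rfl
  rw [nhds_pi, Filter.mem_pi] at hU
  obtain ⟨I, hIfin, t, ht, hsub⟩ := hU
  refine ⟨hIfin.toFinset, fun y hy => ?_⟩
  have hy' : y ∈ I.pi t := by
    intro j hj
    rw [hy j (hIfin.mem_toFinset.mpr hj)]
    have := ht j
    rwa [nhds_discrete, Filter.mem_pure] at this
  exact hsub hy'

lemma WRed_trans {f g h : MV} (h1 : WRed f g) (h2 : WRed g h) : WRed f h := by
  obtain ⟨H1, K1, hH1, hK1, hr1⟩ := h1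
  obtain ⟨H2, K2, hH2, hK2, hr2⟩ := h2
  refine ⟨fun r => H1 (bpair (proj1 r) (H2 (bpair (K1 (proj1 r)) (proj2 r)))),
    K2 ∘ K1, ?_, hK2.comp hK1, ?_⟩
  · exact hH1.comp (cont_bpair cont_proj1
      (hH2.comp (cont_bpair (hK1.comp cont_proj1) cont_proj2)))
  · intro G hG
    have hG2 := hr2 G hG
    have hfin := hr1 _ hG2
    intro p hp
    have := hfin p hp
    simpa [proj1_bpair, proj2_bpair] using this

lemma bpair_odd (p q : Baire) (n : ℕ) : bpair p q (2*n+1) = q n := by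
  unfold bpair; rw [if_neg (by omega)]; congr 1; omega

lemma LPO_total (p : Baire) : (LPO p).Nonempty := by
  classical
  by_cases h : ∃ n, p n = 0
  · exact ⟨fun _ => 0, Or.inl ⟨h, rfl⟩⟩
  · exact ⟨fun _ => 1, Or.inr ⟨h, rfl⟩⟩

lemma Cmv_total (p : Baire) : (Cmv p).Nonempty := ⟨C p, rfl⟩

lemma wred_LLPO_LPO : WRed LLPO LPO := by
  classical
  refine ⟨fun r => fun _ => r 1, fun p n => if p (2*n+1) = 0 then 1 else 0, ?_, ?_, ?_⟩
  · exact cont_coord _ fun n => ⟨id, 1, fun p => rfl⟩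
  · exact cont_coord _ fun n => ⟨fun v => if v = 0 then 1 else 0, 2*n+1, fun p => rfl⟩
  · intro G hG p hp
    obtain ⟨w, hw⟩ := hp
    set Kp : Baire := fun n => if p (2*n+1) = 0 then 1 else 0 with hKp
    have hmem := hG Kp (LPO_total Kp)
    have hval : (fun _ : ℕ => bpair p (G Kp) 1) = fun _ : ℕ => G Kp 0 := by
      funext _; exact bpair_odd p (G Kp) 0
    show (fun _ : ℕ => bpair p (G Kp) 1) ∈ LLPO p
    rw [hval]
    rcases hmem with ⟨⟨n, hn⟩, h0⟩ | ⟨hne, h1⟩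
    · -- Kp n = 0 means p (2n+1) ≠ 0
      have hodd : p (2*n+1) ≠ 0 := by
        intro hc
        rw [hKp] at hn; simp only [hc, if_pos] at hn; omega
      have hev : ∀ m, p (2*m) = 0 := by
        rcases hw with ⟨_, h⟩ | ⟨_, h⟩
        · exact h
        · exact absurd (h n) hodd
      exact Or.inl ⟨h0, hev⟩
    · have hodd : ∀ n, p (2*n+1) = 0 := by
        intro n
        by_contra hc
        exact hne ⟨n, by rw [hKp]; simp only [if_neg hc]⟩
      exact Or.inr ⟨h1, hodd⟩

lemma C_eq_zero {p : Baire} {n : ℕ} :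
    C p n = 0 ↔ ∃ k, p (Nat.pair n k) = 0 := by
  classical
  unfold C
  split
  · next h => simpa using h
  · next h => simpa using h

lemma C_eq_one {p : Baire} {n : ℕ} :
    C p n = 1 ↔ ¬ ∃ k, p (Nat.pair n k) = 0 := by
  classical
  unfold C
  split
  · next h => simpa using h
  · next h => simpa using h

lemma wred_parLLPO_Cmv : WRed parLLPO Cmv := by
  classical
  refine ⟨fun r => fun k => r (2*k+1),
    fun p n => if p (Nat.pair n.unpair.1 (2 * n.unpair.2 + 1)) = 0 then 1 else 0,
    ?_, ?_, ?_⟩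
  · exact cont_coord _ fun k => ⟨id, 2*k+1, fun p => rfl⟩
  · exact cont_coord _ fun n =>
      ⟨fun v => if v = 0 then 1 else 0, Nat.pair n.unpair.1 (2 * n.unpair.2 + 1), fun p => rfl⟩
  · intro G hG p hp
    obtain ⟨w, hw⟩ := hp
    set Kp : Baire := fun n => if p (Nat.pair n.unpair.1 (2 * n.unpair.2 + 1)) = 0 then 1 else 0
      with hKp
    have hmem := hG Kp (Cmv_total Kp)
    have hGC : G Kp = C Kp := hmem
    show (fun k => bpair p (G Kp) (2*k+1)) ∈ parLLPO p
    intro k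
    have hbp : bpair p (G Kp) (2*k+1) = C Kp k := by rw [bpair_odd, hGC]
    have hKpk : ∀ j, Kp (Nat.pair k j) = 0 ↔ p (Nat.pair k (2*j+1)) ≠ 0 := by
      intro j
      rw [hKp]
      simp only [Nat.unpair_pair]
      split
      · next h => simp [h]
      · next h => simp [h]
    by_cases hC : C Kp k = 0
    · rw [C_eq_zero] at hC
      obtain ⟨j, hj⟩ := hC
      have hodd : p (Nat.pair k (2*j+1)) ≠ 0 := (hKpk j).mp hj
      have hev : ∀ n, p (Nat.pair k (2*n)) = 0 := by
        rcases hw k with ⟨_, h⟩ | ⟨_, h⟩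
        · exact h
        · exact absurd (h j) hodd
      refine Or.inl ⟨?_, hev⟩
      show bpair p (G Kp) (2*k+1) = 0
      rw [hbp, C_eq_zero]
      exact ⟨j, hj⟩
    · have h1 : C Kp k = 1 := by
        unfold C; split <;> simp_all [C_eq_zero]
      refine Or.inr ⟨by show bpair p (G Kp) (2*k+1) = 1; rw [hbp, h1], ?_⟩
      intro n
      rw [C_eq_one] at h1
      by_contra hc
      exact h1 ⟨n, (hKpk n).mpr hc⟩

lemma wred_LLPO_parLLPO : WRed LLPO parLLPO := by
  classical
  refine ⟨fun r => fun _ => r 1,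
    fun p n => if n.unpair.1 = 0 then p n.unpair.2 else 0, ?_, ?_, ?_⟩
  · exact cont_coord _ fun n => ⟨id, 1, fun p => rfl⟩
  · exact cont_coord _ fun n =>
      ⟨fun v => if n.unpair.1 = 0 then v else 0, n.unpair.2, fun p => rfl⟩
  · intro G hG p hp
    obtain ⟨w, hw⟩ := hp
    set Kp : Baire := fun n => if n.unpair.1 = 0 then p n.unpair.2 else 0 with hKp
    have hrow : ∀ k j, Kp (Nat.pair k j) = if k = 0 then p j else 0 := by
      intro k j; rw [hKp]; simp [Nat.unpair_pair]
    have hdom : (parLLPO Kp).Nonempty := by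
      refine ⟨fun k => if k = 0 then w 0 else 0, ?_⟩
      intro k
      by_cases hk : k = 0
      · subst hk
        rcases hw with ⟨h0, h⟩ | ⟨h0, h⟩
        · exact Or.inl ⟨by simpa using h0, fun n => by rw [hrow]; simpa using h n⟩
        · exact Or.inr ⟨by simpa using h0, fun n => by rw [hrow]; simpa using h n⟩
      · exact Or.inl ⟨by simp [hk], fun n => by rw [hrow]; simp [hk]⟩
    have hmem := hG Kp hdom
    show (fun _ : ℕ => bpair p (G Kp) 1) ∈ LLPO p
    have hval : bpair p (G Kp) 1 = G Kp 0 := bpair_odd p (G Kp) 0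
    rcases hmem 0 with ⟨h0, h⟩ | ⟨h0, h⟩
    · exact Or.inl ⟨by simpa [hval] using h0, fun n => by have := h n; rwa [hrow, if_pos rfl] at this⟩
    · exact Or.inr ⟨by simpa [hval] using h0, fun n => by have := h n; rwa [hrow, if_pos rfl] at this⟩

lemma wred_LPO_Cmv : WRed LPO Cmv := by
  classical
  refine ⟨fun r => fun _ => r 1,
    fun p n => if n.unpair.1 = 0 then p n.unpair.2 else 1, ?_, ?_, ?_⟩
  · exact cont_coord _ fun n => ⟨id, 1, fun p => rfl⟩
  · exact cont_coord _ fun n =>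
      ⟨fun v => if n.unpair.1 = 0 then v else 1, n.unpair.2, fun p => rfl⟩
  · intro G hG p hp
    set Kp : Baire := fun n => if n.unpair.1 = 0 then p n.unpair.2 else 1 with hKp
    have hmem := hG Kp (Cmv_total Kp)
    have hGC : G Kp = C Kp := hmem
    show (fun _ : ℕ => bpair p (G Kp) 1) ∈ LPO p
    have hval : bpair p (G Kp) 1 = C Kp 0 := (bpair_odd p (G Kp) 0).trans (by rw [hGC])
    have hrow : ∀ j, Kp (Nat.pair 0 j) = p j := by
      intro j; rw [hKp]; simp [Nat.unpair_pair]
    by_cases h : ∃ n, p n = 0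
    · refine Or.inl ⟨h, ?_⟩
      show bpair p (G Kp) 1 = 0
      rw [hval, C_eq_zero]
      obtain ⟨n, hn⟩ := h
      exact ⟨n, by rw [hrow]; exact hn⟩
    · refine Or.inr ⟨h, ?_⟩
      show bpair p (G Kp) 1 = 1
      rw [hval, C_eq_one]
      rintro ⟨n, hn⟩
      rw [hrow] at hn
      exact h ⟨n, hn⟩

lemma pair_avoid (k b : ℕ) (S : Finset ℕ) : ∃ m, Nat.pair k (2*m+b) ∉ S := by
  refine ⟨S.sup id + 1, fun hc => ?_⟩
  have h1 : 2*(S.sup id + 1)+b ≤ Nat.pair k (2*(S.sup id + 1)+b) := Nat.right_le_pair _ _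
  have h2 : Nat.pair k (2*(S.sup id + 1)+b) ≤ S.sup id := Finset.le_sup (f := id) hc
  omega

lemma val01 {v p' : Baire} (hmem : v ∈ parLLPO p') (k : ℕ) : v k = 0 ∨ v k = 1 := by
  rcases hmem k with ⟨h0, _⟩ | ⟨h0, _⟩
  · exact Or.inl h0
  · exact Or.inr h0

lemma row_kill {v p' : Baire} {k b m : ℕ} (hb : b = 0 ∨ b = 1)
    (hmem : v ∈ parLLPO p') (hval : v k = b) (hone : p' (Nat.pair k (2*m+b)) = 1) : False := by
  rcases hmem k with ⟨h0, h⟩ | ⟨h0, h⟩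
  · rcases hb with rfl | rfl
    · have h2 := h m
      simp only [Nat.add_zero] at hone
      omega
    · omega
  · rcases hb with rfl | rfl
    · omega
    · have h2 := h m
      omega

lemma dom_double {k1 x1 k2 x2 : ℕ} (hk : k1 ≠ k2) {p : Baire}
    (hsupp : ∀ i, p i ≠ 0 → i = Nat.pair k1 x1 ∨ i = Nat.pair k2 x2) :
    (parLLPO p).Nonempty := by
  classical
  refine ⟨fun k => if k = k1 then 1 - x1 % 2 else if k = k2 then 1 - x2 % 2 else 0, fun k => ?_⟩
  have main : ∀ (kk xx : ℕ), (kk = k1 → xx = x1) → (kk = k2 → xx = x2) →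
      ((1 - xx % 2 = 0 ∧ ∀ n, p (Nat.pair kk (2*n)) = 0) ∨
       (1 - xx % 2 = 1 ∧ ∀ n, p (Nat.pair kk (2*n+1)) = 0)) := by
    intro kk xx hh1 hh2
    by_cases hpar : xx % 2 = 0
    · refine Or.inr ⟨by omega, fun n => ?_⟩
      by_contra hc
      rcases hsupp _ hc with h | h <;> rw [Nat.pair_eq_pair] at h
      · have := hh1 h.1; omega
      · have := hh2 h.1; omega
    · refine Or.inl ⟨by omega, fun n => ?_⟩
      by_contra hc
      rcases hsupp _ hc with h | h <;> rw [Nat.pair_eq_pair] at h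
      · have := hh1 h.1; omega
      · have := hh2 h.1; omega
  by_cases h1 : k = k1
  · subst h1
    dsimp only
    rw [if_pos rfl]
    exact main k x1 (fun _ => rfl) (fun h => absurd h hk)
  · by_cases h2 : k = k2
    · subst h2
      dsimp only
      rw [if_neg h1, if_pos rfl]
      exact main k x2 (fun h => absurd h h1) (fun _ => rfl)
    · dsimp only
      rw [if_neg h1, if_neg h2]
      refine Or.inl ⟨rfl, fun n => ?_⟩
      by_contra hc
      rcases hsupp _ hc with h | h <;> rw [Nat.pair_eq_pair] at h
      · exact h1 h.1
      · exact h2 h.1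

lemma not_wred_parLLPO_LPO : ¬ WRed parLLPO LPO := by
  classical
  rintro ⟨H, K, hH, hK, hred⟩
  set e : ℕ → Baire := fun b n => if n = 0 then b else 0 with he
  have hG0r : Realizes (fun q => e (if ∃ j, q j = 0 then 0 else 1)) LPO := by
    intro q _
    by_cases h : ∃ j, q j = 0
    · exact Or.inl ⟨h, by simp [he, h]⟩
    · exact Or.inr ⟨h, by simp [he, h]⟩
  have hreal := hred _ hG0r
  have hR : ∀ p, (parLLPO p).Nonempty →
      H (bpair p (e (if ∃ j, K p j = 0 then 0 else 1))) ∈ parLLPO p :=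
    fun p hp => hreal p hp
  have hcont : ∀ b : ℕ, Continuous fun p : Baire => H (bpair p (e b)) :=
    fun b => hH.comp (cont_bpair continuous_id continuous_const)
  set p0 : Baire := fun _ => 0 with hp0
  have hp0dom : (parLLPO p0).Nonempty := ⟨fun _ => 0, fun k => Or.inl ⟨rfl, fun n => rfl⟩⟩
  by_cases hbit0 : ∃ j, K p0 j = 0
  · -- bit at p0 is 0
    obtain ⟨n0, hn0⟩ := hbit0
    have hm0 : H (bpair p0 (e 0)) ∈ parLLPO p0 := by
      have := hR p0 hp0dom
      rwa [if_pos ⟨n0, hn0⟩] at this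
    obtain ⟨F, hF⟩ := loc_const (fun p => H (bpair p (e 0))) (hcont 0) p0 0
    obtain ⟨F2, hF2⟩ := loc_const K hK p0 n0
    set b : ℕ := H (bpair p0 (e 0)) 0 with hb
    have hb01 : b = 0 ∨ b = 1 := val01 hm0 0
    obtain ⟨m, hm⟩ := pair_avoid 0 b (F ∪ F2)
    set c : ℕ := Nat.pair 0 (2*m+b) with hc
    set p1 : Baire := fun i => if i = c then 1 else 0 with hp1
    have hagree : ∀ j ∈ F ∪ F2, p1 j = p0 j := by
      intro j hj
      rw [hp1, hp0]
      dsimp only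
      rw [if_neg]
      rintro rfl
      exact hm hj
    have hK1 : K p1 n0 = 0 := by
      rw [hF2 p1 (fun j hj => hagree j (Finset.mem_union_right _ hj))]
      exact hn0
    have hp1dom : (parLLPO p1).Nonempty := by
      refine dom_double (k1 := 0) (x1 := 2*m+b) (k2 := 1) (x2 := 0) (by omega) ?_
      intro i hi
      rw [hp1] at hi
      dsimp only at hi
      by_cases h : i = c
      · exact Or.inl (h.trans hc)
      · rw [if_neg h] at hi; omega
    have hm1 : H (bpair p1 (e 0)) ∈ parLLPO p1 := by
      have := hR p1 hp1dom
      rwa [if_pos ⟨n0, hK1⟩] at this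
    have hval : H (bpair p1 (e 0)) 0 = b :=
      hF p1 (fun j hj => hagree j (Finset.mem_union_left _ hj))
    exact row_kill hb01 hm1 hval (by rw [hp1]; dsimp only; rw [← hc, if_pos rfl])
  · -- bit at p0 is 1
    have hm0 : H (bpair p0 (e 1)) ∈ parLLPO p0 := by
      have := hR p0 hp0dom
      rwa [if_neg hbit0] at this
    obtain ⟨F, hF⟩ := loc_const (fun p => H (bpair p (e 1))) (hcont 1) p0 0
    set b : ℕ := H (bpair p0 (e 1)) 0 with hb
    have hb01 : b = 0 ∨ b = 1 := val01 hm0 0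
    obtain ⟨m, hm⟩ := pair_avoid 0 b F
    set c1 : ℕ := Nat.pair 0 (2*m+b) with hc1
    set p1 : Baire := fun i => if i = c1 then 1 else 0 with hp1
    have hagree : ∀ j ∈ F, p1 j = p0 j := by
      intro j hj
      rw [hp1, hp0]
      dsimp only
      rw [if_neg]
      rintro rfl
      exact hm hj
    have hp1dom : (parLLPO p1).Nonempty := by
      refine dom_double (k1 := 0) (x1 := 2*m+b) (k2 := 1) (x2 := 0) (by omega) ?_
      intro i hi
      rw [hp1] at hi
      dsimp only at hi
      by_cases h : i = c1
      · exact Or.inl (h.trans hc1)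
      · rw [if_neg h] at hi; omega
    have hone1 : p1 c1 = 1 := by rw [hp1]; dsimp only; rw [if_pos rfl]
    by_cases hbit1 : ∃ j, K p1 j = 0
    · -- bit jumps to 0 at p1: second stage on row 1
      obtain ⟨n0, hn0⟩ := hbit1
      have hm1 : H (bpair p1 (e 0)) ∈ parLLPO p1 := by
        have := hR p1 hp1dom
        rwa [if_pos ⟨n0, hn0⟩] at this
      obtain ⟨F1, hF1⟩ := loc_const (fun p => H (bpair p (e 0))) (hcont 0) p1 1
      obtain ⟨F2, hF2⟩ := loc_const K hK p1 n0
      set v : ℕ := H (bpair p1 (e 0)) 1 with hv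
      have hv01 : v = 0 ∨ v = 1 := val01 hm1 1
      obtain ⟨m', hm'⟩ := pair_avoid 1 v (F1 ∪ F2)
      set c2 : ℕ := Nat.pair 1 (2*m'+v) with hc2
      set p2 : Baire := fun i => if i = c2 then 1 else p1 i with hp2
      have hagree2 : ∀ j ∈ F1 ∪ F2, p2 j = p1 j := by
        intro j hj
        rw [hp2]
        dsimp only
        rw [if_neg]
        rintro rfl
        exact hm' hj
      have hK2 : K p2 n0 = 0 := by
        rw [hF2 p2 (fun j hj => hagree2 j (Finset.mem_union_right _ hj))]
        exact hn0
      have hp2dom : (parLLPO p2).Nonempty := by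
        refine dom_double (k1 := 0) (x1 := 2*m+b) (k2 := 1) (x2 := 2*m'+v) (by omega) ?_
        intro i hi
        rw [hp2] at hi
        dsimp only at hi
        by_cases h : i = c2
        · exact Or.inr (h.trans hc2)
        · rw [if_neg h, hp1] at hi
          dsimp only at hi
          by_cases h' : i = c1
          · exact Or.inl (h'.trans hc1)
          · rw [if_neg h'] at hi; omega
      have hm2 : H (bpair p2 (e 0)) ∈ parLLPO p2 := by
        have := hR p2 hp2dom
        rwa [if_pos ⟨n0, hK2⟩] at this
      have hval2 : H (bpair p2 (e 0)) 1 = v :=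
        hF1 p2 (fun j hj => hagree2 j (Finset.mem_union_left _ hj))
      exact row_kill hv01 hm2 hval2 (by rw [hp2]; dsimp only; rw [← hc2, if_pos rfl])
    · have hm1 : H (bpair p1 (e 1)) ∈ parLLPO p1 := by
        have := hR p1 hp1dom
        rwa [if_neg hbit1] at this
      have hval : H (bpair p1 (e 1)) 0 = b := hF p1 hagree
      exact row_kill hb01 hm1 hval (by rw [hp1]; dsimp only; rw [← hc1, if_pos rfl])

lemma not_wred_LPO_parLLPO : ¬ WRed LPO parLLPO := by
  classical
  rintro ⟨H, K, hH, hK, hred⟩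
  set p : ℕ → Baire := fun t n => if n = t then 0 else 1 with hp
  set pinf : Baire := fun _ => 1 with hpinf
  set r : ℕ → Baire := fun t => K (p t) with hr
  set rinf : Baire := K pinf with hrinf
  have hconv : ∀ c, ∀ᶠ t in Filter.atTop, r t c = rinf c := by
    have h1 : Filter.Tendsto p Filter.atTop (nhds pinf) := by
      rw [tendsto_pi_nhds]
      intro n
      rw [nhds_discrete, Filter.tendsto_pure]
      filter_upwards [Filter.eventually_gt_atTop n] with t ht
      rw [hp, hpinf]
      dsimp only
      rw [if_neg (by omega)]
    have h2 := (hK.tendsto pinf).comp h1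
    intro c
    have h3 := (tendsto_pi_nhds.mp h2) c
    rwa [nhds_discrete, Filter.tendsto_pure] at h3
  set U : Ultrafilter ℕ := Ultrafilter.of Filter.atTop with hUdef
  have hatU : ∀ {s : Set ℕ}, (∀ᶠ t in Filter.atTop, t ∈ s) → s ∈ U :=
    fun hs => Ultrafilter.of_le Filter.atTop hs
  set D : Set ℕ := {t | (parLLPO (r t)).Nonempty ∧ r t ≠ rinf} with hD
  set E : ℕ → Set ℕ := fun k => {t | t ∈ D ∧ ∀ m, r t (Nat.pair k (2*m)) = 0} with hE
  set canon : Baire → Baire :=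
    fun q k => if ∀ m, q (Nat.pair k (2*m)) = 0 then 0 else 1 with hcanon
  set binf : Baire :=
    if (D : Set ℕ) ∈ U then (fun k => if E k ∈ U then 0 else 1) else canon rinf with hbinf
  set G : Baire → Baire :=
    fun q => if (parLLPO q).Nonempty ∧ q ≠ rinf then canon q else binf with hG
  have canon_mem : ∀ q, (parLLPO q).Nonempty → canon q ∈ parLLPO q := by
    rintro q ⟨w, hw⟩ k
    by_cases h : ∀ m, q (Nat.pair k (2*m)) = 0
    · exact Or.inl ⟨by rw [hcanon]; exact if_pos h, h⟩
    · refine Or.inr ⟨by rw [hcanon]; exact if_neg h, ?_⟩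
      rcases hw k with ⟨_, h2⟩ | ⟨_, h2⟩
      · exact absurd h2 h
      · exact h2
  have binf_mem : (parLLPO rinf).Nonempty → binf ∈ parLLPO rinf := by
    intro hne
    by_cases hDU : (D : Set ℕ) ∈ U
    · intro k
      rw [hbinf, if_pos hDU]
      by_cases hEk : E k ∈ U
      · refine Or.inl ⟨if_pos hEk, fun m => ?_⟩
        have hs : {t | r t (Nat.pair k (2*m)) = rinf (Nat.pair k (2*m))} ∈ U :=
          hatU (hconv _)
        obtain ⟨t, ht1, ht2⟩ := Filter.nonempty_of_mem (Filter.inter_mem hEk hs)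
        rw [← ht2]
        exact ht1.2 m
      · refine Or.inr ⟨if_neg hEk, fun m => ?_⟩
        by_contra hm
        apply hEk
        have hs : {t | r t (Nat.pair k (2*m+1)) = rinf (Nat.pair k (2*m+1))} ∈ U :=
          hatU (hconv _)
        apply Filter.mem_of_superset (Filter.inter_mem hDU hs)
        rintro t ⟨htD, hts⟩
        refine ⟨htD, ?_⟩
        obtain ⟨w, hw⟩ := htD.1
        rcases hw k with ⟨_, h2⟩ | ⟨_, h2⟩
        · exact h2
        · exact absurd (by rw [← hts]; exact h2 m) hm
    · rw [hbinf, if_neg hDU]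
      exact canon_mem rinf hne
  have hGrinf : G rinf = binf := by
    rw [hG]
    dsimp only
    rw [if_neg]
    rintro ⟨_, hne⟩
    exact hne rfl
  have match_k : ∀ k, {t | G (r t) k = binf k} ∈ U := by
    intro k
    by_cases hDU : (D : Set ℕ) ∈ U
    · by_cases hEk : E k ∈ U
      · apply Filter.mem_of_superset hEk
        rintro t ⟨htD, hev⟩
        show G (r t) k = binf k
        have htD' : (parLLPO (r t)).Nonempty ∧ r t ≠ rinf := htD
        rw [hG]
        dsimp only
        rw [if_pos htD', hcanon]
        show (if ∀ m, r t (Nat.pair k (2*m)) = 0 then 0 else 1) = binf k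
        rw [if_pos hev, hbinf, if_pos hDU]
        exact (if_pos hEk).symm
      · have hset : (D : Set ℕ) ∩ (E k)ᶜ ∈ U :=
          Filter.inter_mem hDU (Ultrafilter.compl_mem_iff_notMem.mpr hEk)
        apply Filter.mem_of_superset hset
        rintro t ⟨htD, htE⟩
        show G (r t) k = binf k
        have hev : ¬ ∀ m, r t (Nat.pair k (2*m)) = 0 := fun h => htE ⟨htD, h⟩
        have htD' : (parLLPO (r t)).Nonempty ∧ r t ≠ rinf := htD
        rw [hG]
        dsimp only
        rw [if_pos htD', hcanon]
        show (if ∀ m, r t (Nat.pair k (2*m)) = 0 then 0 else 1) = binf k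
        rw [if_neg hev, hbinf, if_pos hDU]
        exact (if_neg hEk).symm
    · have hset : (D : Set ℕ)ᶜ ∈ U := Ultrafilter.compl_mem_iff_notMem.mpr hDU
      apply Filter.mem_of_superset hset
      intro t htD
      show G (r t) k = binf k
      have htD' : ¬((parLLPO (r t)).Nonempty ∧ r t ≠ rinf) := htD
      rw [hG]
      dsimp only
      rw [if_neg htD']
  have hGreal : Realizes G parLLPO := by
    intro q hq
    by_cases h : q = rinf
    · subst h
      rw [hGrinf]
      exact binf_mem hq
    · rw [hG]
      dsimp only
      rw [if_pos ⟨hq, h⟩]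
      exact canon_mem q hq
  have hreal := hred G hGreal
  have hpinfdom : (LPO pinf).Nonempty :=
    ⟨fun _ => 1, Or.inr ⟨by rw [hpinf]; simp, rfl⟩⟩
  have h1 : H (bpair pinf (G rinf)) 0 = 1 := by
    have hm := hreal pinf hpinfdom
    rcases hm with ⟨⟨n, hn⟩, _⟩ | ⟨_, h⟩
    · rw [hpinf] at hn; simp at hn
    · exact h
  obtain ⟨s, hs⟩ := loc_const H hH (bpair pinf binf) 0
  have hmemU : {t | ∀ j ∈ s, bpair (p t) (G (r t)) j = bpair pinf binf j} ∈ U := by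
    have : (⋂ j ∈ s, {t | bpair (p t) (G (r t)) j = bpair pinf binf j}) ∈ U := by
      refine (Filter.biInter_finset_mem (f := (U : Filter ℕ)) s).mpr fun j _ => ?_
      by_cases hj : j % 2 = 0
      · apply hatU
        filter_upwards [Filter.eventually_gt_atTop (j/2)] with t ht
        show bpair (p t) (G (r t)) j = bpair pinf binf j
        unfold bpair
        rw [if_pos hj, if_pos hj, hp, hpinf]
        dsimp only
        rw [if_neg (by omega)]
      · apply Filter.mem_of_superset (match_k (j/2))
        intro t ht
        show bpair (p t) (G (r t)) j = bpair pinf binf j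
        unfold bpair
        rw [if_neg hj, if_neg hj]
        exact ht
    apply Filter.mem_of_superset this
    intro t ht
    exact fun j hj => Set.mem_iInter₂.mp ht j hj
  obtain ⟨t, ht⟩ := Filter.nonempty_of_mem hmemU
  have heq : H (bpair (p t) (G (r t))) 0 = H (bpair pinf binf) 0 := hs _ ht
  have hptdom : (LPO (p t)).Nonempty :=
    ⟨fun _ => 0, Or.inl ⟨⟨t, by rw [hp]; simp⟩, rfl⟩⟩
  have hm := hreal (p t) hptdom
  rw [hGrinf] at h1
  rcases hm with ⟨_, h0⟩ | ⟨hne, _⟩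
  · -- h0 : H (bpair (p t) (G (K (p t)))) 0 = 0
    have : H (bpair (p t) (G (r t))) 0 = 0 := h0
    omega
  · exact hne ⟨t, by rw [hp]; simp⟩

/-- Classification of the omniscience principles under continuous Weihrauch
reducibility: `LLPO <_W LPO`, `LPO` and `\widehat{LLPO}` are incomparable, and
`\widehat{LLPO} <_W C`. -/
theorem omniscience_classification :
    WRed LLPO LPO ∧
    WRed parLLPO Cmv ∧
    ¬ WRed LPO parLLPO ∧
    ¬ WRed LPO LLPO ∧
    ¬ WRed parLLPO LPO ∧
    ¬ WRed Cmv parLLPO := by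
  refine ⟨wred_LLPO_LPO, wred_parLLPO_Cmv, not_wred_LPO_parLLPO, ?_, not_wred_parLLPO_LPO, ?_⟩
  · intro h
    exact not_wred_LPO_parLLPO (WRed_trans h wred_LLPO_parLLPO)
  · intro h
    exact not_wred_LPO_parLLPO (WRed_trans wred_LPO_Cmv h)
end
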